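/- Let X(ε) ~ Gam(ελ, e^{c/ε}) for λ > 0, c ∈ ℝ. Then the random variables −ε log X(ε) converge in distribution as ε ↓ 0 to the shifted exponential distribution sExp(λ, c), i.e. the distribution on [c,∞) with density λ e^{−λ(x−c)}. -/

import Mathlib

open MeasureTheory ProbabilityTheory Filter

/-- The shifted exponential distribution `sExp(l, c)`:
density `l * exp (-l * (x - c))` on `[c, ∞)`. -/
noncomputable def sExpMeasure (l c : ℝ) : Measure ℝ :=
  volume.withDensity fun x =>
    ENNReal.ofReal (if c ≤ x then l * Real.exp (-l * (x - c)) else 0)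

open Real Set
open scoped ENNReal NNReal

lemma integral_withDensity_ofReal {d : ℝ → ℝ} (hd : Measurable d) (hd0 : ∀ x, 0 ≤ d x) (f : ℝ → ℝ) :
    ∫ x, f x ∂(volume.withDensity fun x => ENNReal.ofReal (d x)) = ∫ x, d x * f x := by
  rw [show (fun x => ENNReal.ofReal (d x)) = fun x => ((d x).toNNReal : ℝ≥0∞) from rfl,
      integral_withDensity_eq_integral_smul hd.real_toNNReal]
  simp [NNReal.smul_def, Real.coe_toNNReal _ (hd0 _)]

lemma integrable_exp_neg_abs {m : ℝ} (hm : 0 < m) (c : ℝ) :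
    Integrable (fun y : ℝ => Real.exp (-m * |y - c|)) := by
  have halfP : IntegrableOn (fun y : ℝ => Real.exp (-m * |y|)) (Ioi 0) :=
    (exp_neg_integrableOn_Ioi 0 hm).congr_fun
      (fun y hy => by rw [abs_of_pos hy]) measurableSet_Ioi
  have key : Integrable (fun y : ℝ => Real.exp (-m * |y|)) := by
    rw [← integrableOn_univ, ← @Iio_union_Ici _ _ (0 : ℝ), integrableOn_union,
      integrableOn_Ici_iff_integrableOn_Ioi]
    refine ⟨?_, halfP⟩
    rw [← (Measure.measurePreserving_neg (volume : Measure ℝ)).integrableOn_comp_preimage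
        (Homeomorph.neg ℝ).measurableEmbedding]
    simpa only [Function.comp_def, abs_neg, neg_preimage, neg_Iio, neg_zero] using halfP
  exact key.comp_sub_right c

lemma integral_gammaMeasure (a r : ℝ) (ha : 0 < a) (hr : 0 < r) (f : ℝ → ℝ) :
    ∫ x, f x ∂(gammaMeasure a r) = ∫ x, gammaPDFReal a r x * f x := by
  rw [gammaMeasure]
  exact integral_withDensity_ofReal (measurable_gammaPDFReal a r)
    (gammaPDFReal_nonneg ha hr) f

lemma step1 (lam c : ℝ) (hlam : 0 < lam) {ε : ℝ} (hε : 0 < ε)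
    (f : BoundedContinuousFunction ℝ ℝ) :
    ∫ x, f x ∂(Measure.map (fun x => -ε * Real.log x)
        (gammaMeasure (ε * lam) (Real.exp (c / ε))))
      = (1 / Real.Gamma (ε * lam + 1)) *
        ∫ y, lam * Real.exp (lam * c - lam * y - Real.exp ((c - y) / ε)) * f y := by
  have ha : 0 < ε * lam := mul_pos hε hlam
  have hr : (0:ℝ) < Real.exp (c / ε) := Real.exp_pos _
  rw [integral_map ((measurable_log.const_mul (-ε)).aemeasurable)
      f.continuous.measurable.aestronglyMeasurable,
    integral_gammaMeasure _ _ ha hr]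
  set G : ℝ → ℝ := fun x => gammaPDFReal (ε * lam) (Real.exp (c / ε)) x * f (-ε * Real.log x)
    with hG
  have hstep : ∫ x, G x = ∫ x in Ioi (0:ℝ), G x := by
    rw [← integral_indicator measurableSet_Ioi]
    refine integral_congr_ae ?_
    filter_upwards [compl_mem_ae_iff.2 (volume_singleton (a := (0:ℝ)))] with x hx
    rcases lt_or_gt_of_ne (by simpa using hx : x ≠ 0) with h | h
    · simp [hG, indicator_of_notMem (by simpa using h.le : x ∉ Ioi (0:ℝ)),
        gammaPDFReal, not_le.2 h]
    · rw [indicator_of_mem (by exact h) G]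
  rw [hstep]
  have himg : (fun y : ℝ => Real.exp (-(y / ε))) '' univ = Ioi (0:ℝ) := by
    rw [image_univ, show (fun y : ℝ => Real.exp (-(y / ε))) = Real.exp ∘ (fun y => -(y / ε))
      from rfl, range_comp, Set.range_eq_univ.2 (fun t => ⟨-(t*ε), by field_simp⟩),
      image_univ, Real.range_exp]
  have hd : ∀ y ∈ (univ : Set ℝ), HasDerivWithinAt (fun y : ℝ => Real.exp (-(y / ε)))
      (Real.exp (-(y / ε)) * (-(1/ε))) univ y := by
    intro y _
    exact (((hasDerivAt_id y).div_const ε).neg.exp.congr_deriv (by simp [mul_comm])).hasDerivWithinAt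
  have hinj : InjOn (fun y : ℝ => Real.exp (-(y / ε))) univ := by
    refine Function.Injective.injOn ?_
    intro u v huv
    have := Real.exp_injective huv
    field_simp at this
    linarith
  rw [← himg, integral_image_eq_integral_abs_deriv_smul MeasurableSet.univ hd hinj,
    Measure.restrict_univ, ← integral_const_mul]
  refine integral_congr_ae (Filter.Eventually.of_forall fun y => ?_)
  have hεne : ε ≠ 0 := hε.ne'
  have hΓpos : 0 < Real.Gamma (ε * lam) := Real.Gamma_pos_of_pos ha
  have habs : |Real.exp (-(y / ε)) * (-(1/ε))| = Real.exp (-(y / ε)) * (1/ε) := by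
    rw [abs_mul, abs_of_pos (Real.exp_pos _), abs_neg, abs_of_pos (by positivity)]
  have hlog : -ε * Real.log (Real.exp (-(y / ε))) = y := by
    rw [Real.log_exp]; field_simp
  have e2 : Real.exp (-(y / ε)) * Real.exp (-(y/ε) * (ε * lam - 1))
      = Real.exp (-(lam * y)) := by
    rw [← Real.exp_add]; congr 1; field_simp; ring
  have e4 : Real.exp (lam * c - lam * y - Real.exp ((c - y)/ε))
      = Real.exp (lam * c) * Real.exp (-(lam * y)) * Real.exp (-(Real.exp ((c - y)/ε))) := by
    rw [← Real.exp_add, ← Real.exp_add]; ring_nf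
  have hGy : G (Real.exp (-(y / ε)))
      = Real.exp (lam * c) / Real.Gamma (ε * lam) * Real.exp (-(y/ε) * (ε * lam - 1))
        * Real.exp (-(Real.exp ((c - y)/ε))) * f y := by
    rw [hG]
    simp only
    rw [gammaPDFReal, if_pos (Real.exp_pos _).le, hlog,
      Real.rpow_def_of_pos (Real.exp_pos _), Real.log_exp,
      Real.rpow_def_of_pos (Real.exp_pos _), Real.log_exp]
    have e1 : c / ε * (ε * lam) = lam * c := by field_simp
    have e3 : Real.exp (c/ε) * Real.exp (-(y/ε)) = Real.exp ((c - y)/ε) := by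
      rw [← Real.exp_add]; congr 1; field_simp; ring
    rw [e1, e3]
  simp only [smul_eq_mul]
  rw [habs, hGy, Real.Gamma_add_one ha.ne', e4, ← e2]
  have hΓne : Real.Gamma (ε * lam) ≠ 0 := hΓpos.ne'
  field_simp

lemma integral_sExp (lam c : ℝ) (hlam : 0 < lam) (f : ℝ → ℝ) :
    ∫ x, f x ∂(sExpMeasure lam c)
      = ∫ y, (if c ≤ y then lam * Real.exp (lam * c - lam * y) else 0) * f y := by
  rw [sExpMeasure, integral_withDensity_ofReal
    (Measurable.ite measurableSet_Ici
      (by fun_prop) measurable_const)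
    (fun x => by split <;> positivity) f]
  refine integral_congr_ae (Filter.Eventually.of_forall fun y => ?_)
  simp only
  congr 1
  split
  · congr 1; ring
  · rfl

lemma step2 (lam c : ℝ) (hlam : 0 < lam) (f : BoundedContinuousFunction ℝ ℝ) :
    Tendsto (fun ε : ℝ => ∫ y, lam * Real.exp (lam * c - lam * y - Real.exp ((c - y) / ε)) * f y)
      (nhdsWithin 0 (Set.Ioi 0))
      (nhds (∫ y, (if c ≤ y then lam * Real.exp (lam * c - lam * y) else 0) * f y)) := by
  have hm0 : 0 < min lam 1 := lt_min hlam one_pos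
  apply tendsto_integral_filter_of_dominated_convergence
    (fun y => (lam * ‖f‖) * Real.exp (-(min lam 1) * |y - c|))
  · refine Filter.Eventually.of_forall fun ε => Continuous.aestronglyMeasurable ?_
    exact (continuous_const.mul (((continuous_const.sub (continuous_const.mul continuous_id)).sub
      ((continuous_const.sub continuous_id).div_const ε).rexp).rexp)).mul f.continuous
  · filter_upwards [Ioo_mem_nhdsGT_of_mem
      (left_mem_Ico.2 (by positivity : (0:ℝ) < (lam+1)⁻¹))] with ε hε
    refine Filter.Eventually.of_forall fun y => ?_
    have hE : Real.exp (lam * c - lam * y - Real.exp ((c - y) / ε))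
        ≤ Real.exp (-(min lam 1) * |y - c|) := by
      rw [Real.exp_le_exp]
      rcases le_or_gt c y with h | h
      · rw [abs_of_nonneg (by linarith : (0:ℝ) ≤ y - c)]
        have h1 : min lam 1 * (y - c) ≤ lam * (y - c) :=
          mul_le_mul_of_nonneg_right (min_le_left _ _) (by linarith)
        have h2 := (Real.exp_pos ((c - y) / ε)).le
        nlinarith
      · rw [abs_of_neg (by linarith : y - c < 0)]
        have h1 : (c - y) / ε ≤ Real.exp ((c - y) / ε) := by
          linarith [Real.add_one_le_exp ((c - y) / ε)]
        have h2 : (lam + 1) * (c - y) ≤ (c - y) / ε := by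
          rw [div_eq_mul_inv, mul_comm (c - y)]
          refine mul_le_mul_of_nonneg_right ?_ (by linarith)
          rw [le_inv_comm₀ (by positivity) hε.1]
          exact hε.2.le
        have h3 : min lam 1 * (c - y) ≤ 1 * (c - y) :=
          mul_le_mul_of_nonneg_right (min_le_right _ _) (by linarith)
        nlinarith
    rw [norm_mul, norm_mul, Real.norm_eq_abs lam, abs_of_pos hlam,
      Real.norm_eq_abs (Real.exp _), abs_of_pos (Real.exp_pos _)]
    calc lam * Real.exp (lam * c - lam * y - Real.exp ((c - y) / ε)) * ‖f y‖
        ≤ lam * Real.exp (-(min lam 1) * |y - c|) * ‖f‖ :=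
          mul_le_mul (mul_le_mul_of_nonneg_left hE hlam.le) (f.norm_coe_le_norm y)
            (norm_nonneg _) (by positivity)
      _ = _ := by ring
  · exact (integrable_exp_neg_abs hm0 c).const_mul _
  · have hcnull : (volume : Measure ℝ) {c} = 0 := volume_singleton
    filter_upwards [compl_mem_ae_iff.2 hcnull] with y hy
    rcases lt_or_gt_of_ne (show y ≠ c by simpa using hy) with h | h
    · rw [if_neg (not_le.2 h), zero_mul]
      have h1 : Tendsto (fun ε : ℝ => (c - y) / ε) (nhdsWithin 0 (Set.Ioi 0)) atTop := by
        simpa [div_eq_mul_inv] using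
          (tendsto_inv_nhdsGT_zero (𝕜 := ℝ)).const_mul_atTop (by linarith : (0:ℝ) < c - y)
      have h2 : Tendsto (fun ε : ℝ => lam * c - lam * y - Real.exp ((c - y) / ε))
          (nhdsWithin 0 (Set.Ioi 0)) atBot := by
        have h3 := tendsto_neg_atTop_atBot.comp (Real.tendsto_exp_atTop.comp h1)
        simpa [sub_eq_add_neg] using tendsto_atBot_add_const_left _ (lam * c - lam * y) h3
      have h4 := ((Real.tendsto_exp_atBot.comp h2).const_mul lam).mul_const (f y)
      simpa using h4
    · rw [if_pos h.le]
      have h1 : Tendsto (fun ε : ℝ => (c - y) / ε) (nhdsWithin 0 (Set.Ioi 0)) atBot := by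
        simpa [div_eq_mul_inv] using
          (tendsto_inv_nhdsGT_zero (𝕜 := ℝ)).const_mul_atTop_of_neg (by linarith : c - y < 0)
      have h2 : Tendsto (fun ε : ℝ => Real.exp ((c - y) / ε)) (nhdsWithin 0 (Set.Ioi 0))
          (nhds 0) := Real.tendsto_exp_atBot.comp h1
      have h2' := (tendsto_const_nhds (x := lam * c - lam * y)).sub h2
      have h3 := (((Real.continuous_exp.tendsto _).comp h2').const_mul lam).mul_const (f y)
      simpa using h3

theorem gamma_ultradiscretization (lam c : ℝ) (hlam : 0 < lam) :
    ∀ f : BoundedContinuousFunction ℝ ℝ,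
      Tendsto
        (fun ε : ℝ => ∫ x, f x ∂(Measure.map (fun x => -ε * Real.log x)
          (gammaMeasure (ε * lam) (Real.exp (c / ε)))))
        (nhdsWithin 0 (Set.Ioi 0))
        (nhds (∫ x, f x ∂(sExpMeasure lam c))) := by
  intro f
  have hΓ : Tendsto (fun ε : ℝ => 1 / Real.Gamma (ε * lam + 1)) (nhdsWithin 0 (Set.Ioi 0))
      (nhds 1) := by
    have hg : ContinuousAt Real.Gamma ((0:ℝ) * lam + 1) := by
      refine (Real.differentiableAt_Gamma fun m => ?_).continuousAt
      have := Nat.cast_nonneg (α := ℝ) m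
      intro hEq
      rw [zero_mul, zero_add] at hEq
      linarith
    have hlin : Continuous (fun ε : ℝ => ε * lam + 1) := by fun_prop
    have hc : ContinuousAt (fun ε : ℝ => Real.Gamma (ε * lam + 1)) 0 :=
      ContinuousAt.comp (f := fun ε : ℝ => ε * lam + 1) hg hlin.continuousAt
    have hne : Real.Gamma ((0:ℝ) * lam + 1) ≠ 0 := by simp [Real.Gamma_one]
    have h2 := (((continuousAt_const (y := (1:ℝ))).div hc hne).tendsto).mono_left
      (nhdsWithin_le_nhds (s := Set.Ioi (0:ℝ)))
    simpa [Real.Gamma_one, Function.comp, Pi.div_apply, Pi.div_def] using h2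
  have key := hΓ.mul (step2 lam c hlam f)
  rw [one_mul] at key
  rw [integral_sExp lam c hlam f]
  refine Tendsto.congr' ?_ key
  filter_upwards [self_mem_nhdsWithin] with ε hε
  exact (step1 lam c hlam hε f).symm
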